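/- arXiv:2004.10281 — 2 statements merged into one kernel-verified Lean document; each statement's English description precedes it below -/
import Mathlib

section
/- Let the weight vector w ∈ ℝ^{n_w} be distributed as a product of independent one-dimensional Gaussians ℙ = ⨂_{j=1}^{n_w} N(μ_j, Σ_j) with Σ_j > 0. Let T ⊆ ℝ^m, let the safe output set be S = {y ∈ ℝ^{n_c} | C_S y + d_S ≥ 0} for a matrix C_S ∈ ℝ^{n_S × n_c} and vector d_S ∈ ℝ^{n_S} (inequality componentwise). Suppose [w^{L,1}, w^{U,1}], …, [w^{L,M}, w^{U,M}] are pairwise disjoint hyper-rectangles in ℝ^{n_w} such that for every i, every w in the i-th rectangle, and every x ∈ T one has C_S f^w(x) + d_S ≥ 0 componentwise. Then p := Σ_{i=1}^M Π_{j=1}^{n_w} ℙ_j([w^{L,i}_j, w^{U,i}_j]) satisfies p ≤ P_safe(T,S), where ℙ_j = N(μ_j, Σ_j). -/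
open MeasureTheory ProbabilityTheory Matrix

/-- Correctness of the lower-bounding algorithm for probabilistic safety of Bayesian neural
networks with a diagonal-Gaussian weight posterior and a polyhedral safe output set
`S = {y | C y + d ≥ 0}`: the sum over disjoint certified-safe weight rectangles of the
products of coordinatewise Gaussian probabilities is a lower bound on `P_safe(T,S)`. -/
theorem algorithm_lower_bound_psafe {nw m nc nS M : ℕ}
    (μ : Fin nw → ℝ) (Sv : Fin nw → NNReal) (hS : ∀ j, 0 < Sv j)
    (T : Set (Fin m → ℝ))
    (C : Matrix (Fin nS) (Fin nc) ℝ) (d : Fin nS → ℝ)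
    (f : (Fin nw → ℝ) → (Fin m → ℝ) → (Fin nc → ℝ))
    (wL wU : Fin M → Fin nw → ℝ)
    (hdisj : ∀ i i' : Fin M, i ≠ i' →
      Disjoint (Set.univ.pi fun j => Set.Icc (wL i j) (wU i j))
               (Set.univ.pi fun j => Set.Icc (wL i' j) (wU i' j)))
    (hsafe : ∀ i : Fin M, ∀ w ∈ Set.univ.pi fun j => Set.Icc (wL i j) (wU i j),
      ∀ x ∈ T, ∀ s : Fin nS, C.mulVec (f w x) s + d s ≥ 0) :
    ∑ i : Fin M, ∏ j : Fin nw, gaussianReal (μ j) (Sv j) (Set.Icc (wL i j) (wU i j)) ≤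
      Measure.pi (fun j => gaussianReal (μ j) (Sv j))
        {w | ∀ x ∈ T, f w x ∈ {y : Fin nc → ℝ | ∀ s : Fin nS, C.mulVec y s + d s ≥ 0}} := by
  set ν := Measure.pi (fun j => gaussianReal (μ j) (Sv j)) with hν
  have hmeas : ∀ i : Fin M,
      MeasurableSet (Set.univ.pi fun j => Set.Icc (wL i j) (wU i j)) :=
    fun i => MeasurableSet.univ_pi fun j => measurableSet_Icc
  have hpi : ∀ i : Fin M,
      ∏ j : Fin nw, gaussianReal (μ j) (Sv j) (Set.Icc (wL i j) (wU i j)) =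
        ν (Set.univ.pi fun j => Set.Icc (wL i j) (wU i j)) := by
    intro i
    rw [hν, Measure.pi_pi]
  calc ∑ i : Fin M, ∏ j : Fin nw, gaussianReal (μ j) (Sv j) (Set.Icc (wL i j) (wU i j))
      = ∑ i : Fin M, ν (Set.univ.pi fun j => Set.Icc (wL i j) (wU i j)) := by
        simp_rw [hpi]
    _ = ν (⋃ i ∈ Finset.univ, Set.univ.pi fun j => Set.Icc (wL (i : Fin M) j) (wU i j)) := by
        rw [measure_biUnion_finset (fun i _ i' _ h => hdisj i i' h) (fun i _ => hmeas i)]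
    _ ≤ _ := by
        apply measure_mono
        rintro w hw
        simp only [Set.mem_iUnion, Finset.mem_univ, exists_prop, true_and] at hw
        obtain ⟨i, hi⟩ := hw
        intro x hx s
        exact hsafe i w hi x hx s
end

section
/- Let σ : ℝ → ℝ be monotone nondecreasing. Consider the feed-forward network defined by z^{(0)} = x, ζ^{(k+1)}_i = Σ_j W^{(k)}_{ij} z^{(k)}_j + b^{(k)}_i and z^{(k)}_i = σ(ζ^{(k)}_i) for k = 0, …, K, with output f^w(x) = ζ^{(K+1)}. Suppose the input satisfies x^L ≤ x ≤ x^U componentwise and, for each layer k, W^{(k),L} ≤ W^{(k)} ≤ W^{(k),U} and b^{(k),L} ≤ b^{(k)} ≤ b^{(k),U} entrywise. Define recursively z^{(0),L} = x^L, z^{(0),U} = x^U; t^{(k),L}_{ij} = min{W^{(k),L}_{ij} z^{(k),L}_j, W^{(k),U}_{ij} z^{(k),L}_j, W^{(k),L}_{ij} z^{(k),U}_j, W^{(k),U}_{ij} z^{(k),U}_j} and t^{(k),U}_{ij} the corresponding maximum; ζ^{(k+1),L} = Σ_j t^{(k),L}_{:j} + b^{(k),L}, ζ^{(k+1),U} =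 Σ_j t^{(k),U}_{:j} + b^{(k),U}; and z^{(k),L} = σ(ζ^{(k),L}), z^{(k),U} = σ(ζ^{(k),U}) applied componentwise. Then f^w(x) = ζ^{(K+1)} ∈ [ζ^{(K+1),L}, ζ^{(K+1),U}] componentwise, for every such x and every such collection of weights and biases. -/
/-- Activations of a fully-connected feed-forward network with pointwise activation `σ`,
layer widths `n`, weight matrices `W` and biases `b`: `z⁽⁰⁾ = x`,
`z⁽ᵏ⁺¹⁾ᵢ = σ (∑ⱼ W⁽ᵏ⁾ᵢⱼ z⁽ᵏ⁾ⱼ + b⁽ᵏ⁾ᵢ)`.  The pre-activation of layer `k+1` is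
`ζ⁽ᵏ⁺¹⁾ᵢ = ∑ⱼ W⁽ᵏ⁾ᵢⱼ z⁽ᵏ⁾ⱼ + b⁽ᵏ⁾ᵢ`, and the network output is `ζ⁽ᴷ⁺¹⁾`. -/
noncomputable def nnAct (σ : ℝ → ℝ) (n : ℕ → ℕ)
    (W : ∀ k, Fin (n (k + 1)) → Fin (n k) → ℝ) (b : ∀ k, Fin (n (k + 1)) → ℝ)
    (x : Fin (n 0) → ℝ) : ∀ k, Fin (n k) → ℝ
  | 0 => x
  | (k + 1) => fun i => σ ((∑ j, W k i j * nnAct σ n W b x k j) + b k i)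

/-- Interval bound propagation: lower and upper activation bounds
`(z⁽ᵏ⁾,ᴸ, z⁽ᵏ⁾,ᵁ)` at every layer `k`, computed from the input box `[xL, xU]`, the weight
interval bounds `[WL, WU]` and the bias interval bounds `[bL, bU]`, by taking cornerwise
minima/maxima of the bilinear monomials and applying `σ` to the resulting pre-activation
bounds. -/
noncomputable def ibpBounds (σ : ℝ → ℝ) (n : ℕ → ℕ)
    (WL WU : ∀ k, Fin (n (k + 1)) → Fin (n k) → ℝ) (bL bU : ∀ k, Fin (n (k + 1)) → ℝ)
    (xL xU : Fin (n 0) → ℝ) : ∀ k, (Fin (n k) → ℝ) × (Fin (n k) → ℝ)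
  | 0 => (xL, xU)
  | (k + 1) =>
    (fun i => σ ((∑ j,
        min (min (WL k i j * (ibpBounds σ n WL WU bL bU xL xU k).1 j)
                 (WU k i j * (ibpBounds σ n WL WU bL bU xL xU k).1 j))
            (min (WL k i j * (ibpBounds σ n WL WU bL bU xL xU k).2 j)
                 (WU k i j * (ibpBounds σ n WL WU bL bU xL xU k).2 j))) + bL k i),
     fun i => σ ((∑ j,
        max (max (WL k i j * (ibpBounds σ n WL WU bL bU xL xU k).1 j)
                 (WU k i j * (ibpBounds σ n WL WU bL bU xL xU k).1 j))
            (max (WL k i j * (ibpBounds σ n WL WU bL bU xL xU k).2 j)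
                 (WU k i j * (ibpBounds σ n WL WU bL bU xL xU k).2 j))) + bU k i))


lemma corner_min_le {wL w wU zL z zU : ℝ} (h1 : wL ≤ w) (h2 : w ≤ wU)
    (h3 : zL ≤ z) (h4 : z ≤ zU) :
    min (min (wL * zL) (wU * zL)) (min (wL * zU) (wU * zU)) ≤ w * z := by
  have hzl : min (wL * zL) (wU * zL) ≤ w * zL := by
    rcases le_total 0 zL with h | h
    · exact le_trans (min_le_left _ _) (mul_le_mul_of_nonneg_right h1 h)
    · exact le_trans (min_le_right _ _) (mul_le_mul_of_nonpos_right h2 h)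
  have hzu : min (wL * zU) (wU * zU) ≤ w * zU := by
    rcases le_total 0 zU with h | h
    · exact le_trans (min_le_left _ _) (mul_le_mul_of_nonneg_right h1 h)
    · exact le_trans (min_le_right _ _) (mul_le_mul_of_nonpos_right h2 h)
  rcases le_total 0 w with h | h
  · exact le_trans (min_le_left _ _) (hzl.trans (mul_le_mul_of_nonneg_left h3 h))
  · exact le_trans (min_le_right _ _) (hzu.trans (mul_le_mul_of_nonpos_left h4 h))

lemma le_corner_max {wL w wU zL z zU : ℝ} (h1 : wL ≤ w) (h2 : w ≤ wU)
    (h3 : zL ≤ z) (h4 : z ≤ zU) :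
    w * z ≤ max (max (wL * zL) (wU * zL)) (max (wL * zU) (wU * zU)) := by
  have hzl : w * zL ≤ max (wL * zL) (wU * zL) := by
    rcases le_total 0 zL with h | h
    · exact le_trans (mul_le_mul_of_nonneg_right h2 h) (le_max_right _ _)
    · exact le_trans (mul_le_mul_of_nonpos_right h1 h) (le_max_left _ _)
  have hzu : w * zU ≤ max (wL * zU) (wU * zU) := by
    rcases le_total 0 zU with h | h
    · exact le_trans (mul_le_mul_of_nonneg_right h2 h) (le_max_right _ _)
    · exact le_trans (mul_le_mul_of_nonpos_right h1 h) (le_max_left _ _)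
  rcases le_total 0 w with h | h
  · exact le_trans (mul_le_mul_of_nonneg_left h4 h) (hzu.trans (le_max_right _ _))
  · exact le_trans (mul_le_mul_of_nonpos_left h3 h) (hzl.trans (le_max_left _ _))

/-- Soundness of interval bound propagation (IBP) jointly over an input box and weight/bias
hyper-rectangles: for a monotone activation `σ`, the network output
`f^w(x) = ζ⁽ᴷ⁺¹⁾` lies componentwise in `[ζ⁽ᴷ⁺¹⁾,ᴸ, ζ⁽ᴷ⁺¹⁾,ᵁ]` for every input in the box
and every collection of weights and biases in the given intervals. -/
theorem ibp_sound (σ : ℝ → ℝ) (hσ : Monotone σ) (n : ℕ → ℕ) (K : ℕ)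
    (W WL WU : ∀ k, Fin (n (k + 1)) → Fin (n k) → ℝ)
    (b bL bU : ∀ k, Fin (n (k + 1)) → ℝ)
    (x xL xU : Fin (n 0) → ℝ)
    (hx : ∀ j, xL j ≤ x j ∧ x j ≤ xU j)
    (hW : ∀ k, k ≤ K → ∀ i j, WL k i j ≤ W k i j ∧ W k i j ≤ WU k i j)
    (hb : ∀ k, k ≤ K → ∀ i, bL k i ≤ b k i ∧ b k i ≤ bU k i) :
    ∀ i : Fin (n (K + 1)),
      (∑ j, min (min (WL K i j * (ibpBounds σ n WL WU bL bU xL xU K).1 j)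
                     (WU K i j * (ibpBounds σ n WL WU bL bU xL xU K).1 j))
                (min (WL K i j * (ibpBounds σ n WL WU bL bU xL xU K).2 j)
                     (WU K i j * (ibpBounds σ n WL WU bL bU xL xU K).2 j))) + bL K i
        ≤ (∑ j, W K i j * nnAct σ n W b x K j) + b K i ∧
      (∑ j, W K i j * nnAct σ n W b x K j) + b K i
        ≤ (∑ j, max (max (WL K i j * (ibpBounds σ n WL WU bL bU xL xU K).1 j)
                         (WU K i j * (ibpBounds σ n WL WU bL bU xL xU K).1 j))
                    (max (WL K i j * (ibpBounds σ n WL WU bL bU xL xU K).2 j)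
                         (WU K i j * (ibpBounds σ n WL WU bL bU xL xU K).2 j))) + bU K i := by

  have main : ∀ k, k ≤ K + 1 → ∀ j : Fin (n k),
      (ibpBounds σ n WL WU bL bU xL xU k).1 j ≤ nnAct σ n W b x k j ∧
      nnAct σ n W b x k j ≤ (ibpBounds σ n WL WU bL bU xL xU k).2 j := by
    intro k
    induction k with
    | zero => intro _ j; exact hx j
    | succ k ih =>
      intro hk j
      have hk' : k ≤ K := Nat.lt_succ_iff.mp hk
      have ih' := ih (le_of_lt hk)
      constructor
      · show σ _ ≤ σ _
        apply hσ
        apply add_le_add _ (hb k hk' j).1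
        apply Finset.sum_le_sum
        intro m _
        exact corner_min_le (hW k hk' j m).1 (hW k hk' j m).2 (ih' m).1 (ih' m).2
      · show σ _ ≤ σ _
        apply hσ
        apply add_le_add _ (hb k hk' j).2
        apply Finset.sum_le_sum
        intro m _
        exact le_corner_max (hW k hk' j m).1 (hW k hk' j m).2 (ih' m).1 (ih' m).2
  intro i
  have hm := main K (Nat.le_succ K)
  constructor
  · apply add_le_add _ (hb K le_rfl i).1
    apply Finset.sum_le_sum
    intro m _
    exact corner_min_le (hW K le_rfl i m).1 (hW K le_rfl i m).2 (hm m).1 (hm m).2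
  · apply add_le_add _ (hb K le_rfl i).2
    apply Finset.sum_le_sum
    intro m _
    exact le_corner_max (hW K le_rfl i m).1 (hW K le_rfl i m).2 (hm m).1 (hm m).2
end
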